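/- If (m−2)·ĝ − Σ_{i=1}^m ĝ_i ≥ 0 (equivalently, the genus g of the central curve is positive), then (m−2)·ℓ − Σ_{i=1}^m e_i belongs to the numerical semigroup ⟨e_1,…,e_m⟩, and (m−2)·ĝ − Σ_{i=1}^m ĝ_i belongs to the numerical semigroup ⟨ĝ_1,…,ĝ_m⟩. (Here (m−2)ℓ − Σe_i is the a-invariant a(R) of the homogeneous coordinate ring and (m−2)ĝ − Σĝ_i = 2g−2.) -/

import Mathlib

lemma rep_lemma (x y N : ℕ) (hx : 0 < x) (hy : 0 < y) (hco : Nat.Coprime x y)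
    (hN : x * y < N) : ∃ u v : ℕ, 0 < u ∧ 0 < v ∧ u * x + v * y = N := by
  haveI : NeZero y := ⟨hy.ne'⟩
  set w : (ZMod y)ˣ := ZMod.unitOfCoprime x hco with hw
  set z : ZMod y := (N : ZMod y) * ((w⁻¹ : (ZMod y)ˣ) : ZMod y) with hz
  set u1 : ℕ := z.val with hu1
  have hzcast : (u1 : ZMod y) = z := ZMod.natCast_val z |>.trans (ZMod.cast_id _ _)
  set u : ℕ := if u1 = 0 then y else u1 with hu
  have hu_pos : 0 < u := by
    rw [hu]; split
    · exact hy
    · omega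
  have hu_le : u ≤ y := by
    have := ZMod.val_lt z
    rw [hu]; split <;> omega
  have hucast : (u : ZMod y) = z := by
    rw [hu]; split
    · next h => rw [← hzcast, h]; simp
    · exact hzcast
  have hmod : (u * x : ZMod y) = (N : ZMod y) := by
    push_cast
    rw [hucast, hz]
    have : ((w⁻¹ : (ZMod y)ˣ) : ZMod y) * ((w : (ZMod y)ˣ) : ZMod y) = 1 := by
      rw [← Units.val_mul]; simp
    have hwx : ((w : (ZMod y)ˣ) : ZMod y) = (x : ZMod y) := ZMod.coe_unitOfCoprime x hco
    rw [← hwx]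
    rw [mul_assoc, this, mul_one]
  have hmod' : ((u * x : ℕ) : ZMod y) = (N : ZMod y) := by push_cast; exact hmod
  have hmodeq : u * x ≡ N [MOD y] := (ZMod.natCast_eq_natCast_iff _ _ _).mp hmod'
  have hlt : u * x < N := by
    calc u * x ≤ y * x := Nat.mul_le_mul_right _ hu_le
    _ = x * y := Nat.mul_comm _ _
    _ < N := hN
  have hle : u * x ≤ N := le_of_lt hlt
  have hdvd : y ∣ N - u * x := (Nat.modEq_iff_dvd' hle).mp hmodeq
  obtain ⟨v, hv⟩ := hdvd
  have hvpos : 0 < v := by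
    rcases Nat.eq_zero_or_pos v with h | h
    · subst h; rw [Nat.mul_zero] at hv; omega
    · exact h
  refine ⟨u, v, hu_pos, hvpos, ?_⟩
  rw [Nat.mul_comm v y]
  omega


lemma exists_mem_of_prime_dvd_lcm {ι : Type*} [DecidableEq ι] {s : Finset ι} {f : ι → ℕ}
    {p : ℕ} (hp : p.Prime) (h : p ∣ s.lcm f) : ∃ i ∈ s, p ∣ f i := by
  classical
  induction s using Finset.induction_on with
  | empty => rw [Finset.lcm_empty] at h; have := Nat.dvd_one.mp h; have := hp.one_lt; omega
  | insert _ _ hx ih =>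
    rename_i a t
    rw [Finset.lcm_insert] at h
    have h2 : p ∣ f a * t.lcm f := h.trans (Nat.lcm_dvd_mul _ _)
    rcases hp.dvd_mul.mp h2 with h3 | h3
    · exact ⟨a, Finset.mem_insert_self a t, h3⟩
    · obtain ⟨i, hi, hd⟩ := ih h3
      exact ⟨i, Finset.mem_insert_of_mem hi, hd⟩

lemma lcm_factorization {ι : Type*} [DecidableEq ι] (s : Finset ι) (f : ι → ℕ)
    (hf : ∀ i ∈ s, f i ≠ 0) (p : ℕ) :
    (s.lcm f).factorization p = s.sup (fun i => (f i).factorization p) := by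
  classical
  induction s using Finset.induction_on with
  | empty => simp
  | insert _ _ hx ih =>
    rename_i a t
    have hfa : f a ≠ 0 := hf a (Finset.mem_insert_self a t)
    have hft : ∀ i ∈ t, f i ≠ 0 := fun i hi => hf i (Finset.mem_insert_of_mem hi)
    have hlt : t.lcm f ≠ 0 := by
      intro h0
      rw [Finset.lcm_eq_zero_iff] at h0
      obtain ⟨i, hi, h⟩ := h0
      exact hft i hi h
    rw [Finset.lcm_insert, Finset.sup_insert]
    show (Nat.lcm (f a) (t.lcm f)).factorization p = _
    rw [Nat.factorization_lcm hfa hlt, Finsupp.sup_apply, ih hft]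


lemma pair_sum (βi βj N : ℕ) (hi : 0 < βi) (hj : 0 < βj)
    (hN : Nat.lcm βi βj < N * Nat.gcd βi βj) :
    ∃ u v : ℕ, 0 < u ∧ 0 < v ∧
      (u : ℚ)/βi + (v : ℚ)/βj = (N : ℚ) / (Nat.lcm βi βj) := by
  set G := Nat.gcd βi βj with hG
  set L := Nat.lcm βi βj with hL
  have hGpos : 0 < G := Nat.gcd_pos_of_pos_left _ hi
  have hLpos : 0 < L := Nat.pos_of_ne_zero (Nat.lcm_ne_zero hi.ne' hj.ne')
  have hGL : G * L = βi * βj := Nat.gcd_mul_lcm βi βj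
  set Bi := βj / G with hBi
  set Bj := βi / G with hBj
  have hBiβ : Bi * βi = L := by
    have h1 : Bi * G = βj := Nat.div_mul_cancel (Nat.gcd_dvd_right βi βj)
    have h2 : Bi * βi * G = L * G := by
      calc Bi * βi * G = (Bi * G) * βi := by ring
      _ = βj * βi := by rw [h1]
      _ = L * G := by rw [Nat.mul_comm βj βi, ← hGL, Nat.mul_comm G L]
    exact Nat.eq_of_mul_eq_mul_right hGpos h2
  have hBjβ : Bj * βj = L := by
    have h1 : Bj * G = βi := Nat.div_mul_cancel (Nat.gcd_dvd_left βi βj)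
    have h2 : Bj * βj * G = L * G := by
      calc Bj * βj * G = (Bj * G) * βj := by ring
      _ = βi * βj := by rw [h1]
      _ = L * G := by rw [← hGL, Nat.mul_comm G L]
    exact Nat.eq_of_mul_eq_mul_right hGpos h2
  have hco : Nat.Coprime Bi Bj := (Nat.coprime_div_gcd_div_gcd hGpos).symm
  have hBipos : 0 < Bi := by
    rcases Nat.eq_zero_or_pos Bi with h | h
    · exfalso; rw [h, Nat.zero_mul] at hBiβ; omega
    · exact h
  have hBjpos : 0 < Bj := by
    rcases Nat.eq_zero_or_pos Bj with h | h
    · exfalso; rw [h, Nat.zero_mul] at hBjβ; omega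
    · exact h
  have hBB : Bi * Bj < N := by
    have h1 : Bi * Bj * G = L := by
      have : Bi * Bj * G = Bi * (Bj * G) := by ring
      rw [this, Nat.div_mul_cancel (Nat.gcd_dvd_left βi βj)]
      exact hBiβ
    have h2 : Bi * Bj * G < N * G := by rw [h1]; exact hN
    exact Nat.lt_of_mul_lt_mul_right h2
  obtain ⟨u, v, hu, hv, huv⟩ := rep_lemma Bi Bj N hBipos hBjpos hco hBB
  refine ⟨u, v, hu, hv, ?_⟩
  have e1 : (Bi : ℚ) * βi = L := by exact_mod_cast congrArg (Nat.cast : ℕ → ℚ) hBiβ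
  have e2 : (Bj : ℚ) * βj = L := by exact_mod_cast congrArg (Nat.cast : ℕ → ℚ) hBjβ
  have eN : (u : ℚ) * Bi + (v : ℚ) * Bj = N := by exact_mod_cast congrArg (Nat.cast : ℕ → ℚ) huv
  have hβi0 : (βi : ℚ) ≠ 0 := by positivity
  have hβj0 : (βj : ℚ) ≠ 0 := by positivity
  have hL0 : (L : ℚ) ≠ 0 := by
    have : (0:ℚ) < L := by exact_mod_cast hLpos
    exact this.ne'
  rw [div_add_div _ _ hβi0 hβj0, div_eq_div_iff (by positivity) hL0]
  linear_combination (-((u:ℚ) * βj)) * e1 + (-((v:ℚ) * βi)) * e2 + ((βi:ℚ) * βj) * eN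


lemma deficit_one {ι : Type*} [DecidableEq ι] (s : Finset ι) (β : ι → ℕ)
    (hβ : ∀ k ∈ s, 0 < β k) (i j : ι) (hi : i ∈ s) (hj : j ∈ s) (hij : i ≠ j)
    (hgcd : 2 ≤ Nat.gcd (β i) (β j)) :
    ∃ d : ι → ℕ, (∀ k ∈ s, 0 < d k) ∧
      ∑ k ∈ s, (d k : ℚ) / β k = (s.card : ℚ) - 1 := by
  have hβi := hβ i hi
  have hβj := hβ j hj
  have hLpos : 0 < Nat.lcm (β i) (β j) :=
    Nat.pos_of_ne_zero (Nat.lcm_ne_zero hβi.ne' hβj.ne')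
  have hNlt : Nat.lcm (β i) (β j) < Nat.lcm (β i) (β j) * Nat.gcd (β i) (β j) :=
    (Nat.lt_mul_iff_one_lt_right hLpos).mpr hgcd
  obtain ⟨u, v, hu, hv, huv⟩ := pair_sum (β i) (β j) (Nat.lcm (β i) (β j)) hβi hβj hNlt
  have hpair : (u : ℚ) / β i + (v : ℚ) / β j = 1 := by
    rw [huv, div_self]
    exact_mod_cast hLpos.ne'
  refine ⟨fun k => if k = i then u else if k = j then v else β k, ?_, ?_⟩
  · intro k hk
    by_cases h1 : k = i
    · simpa [h1] using hu
    · by_cases h2 : k = j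
      · simpa [h1, h2, Ne.symm hij] using hv
      · simpa [h1, h2] using hβ k hk
  · have hji : j ∈ s.erase i := Finset.mem_erase.mpr ⟨fun h => hij h.symm, hj⟩
    set f : ι → ℚ := fun k => ((if k = i then u else if k = j then v else β k : ℕ) : ℚ) / β k with hf
    have e1 : ∑ k ∈ (s.erase i).erase j, f k + f j = ∑ k ∈ s.erase i, f k :=
      Finset.sum_erase_add _ _ hji
    have e2 : ∑ k ∈ s.erase i, f k + f i = ∑ k ∈ s, f k :=
      Finset.sum_erase_add _ _ hi
    have e3 : ∑ k ∈ (s.erase i).erase j, f k = (((s.erase i).erase j).card : ℚ) := by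
      rw [Finset.sum_congr rfl (g := fun _ => (1:ℚ)) ?_, Finset.sum_const, nsmul_eq_mul, mul_one]
      intro k hk
      obtain ⟨hkj, hki, hks⟩ : k ≠ j ∧ k ≠ i ∧ k ∈ s := by
        have h1 := Finset.mem_erase.mp hk
        have h2 := Finset.mem_erase.mp h1.2
        exact ⟨h1.1, h2.1, h2.2⟩
      have hβk : (β k : ℚ) ≠ 0 := by
        have := hβ k hks; positivity
      simp only [hf, hki, hkj, if_false]
      exact div_self hβk
    have hfi : f i = (u : ℚ) / β i := by simp [hf]
    have hfj : f j = (v : ℚ) / β j := by simp [hf, hij.symm]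
    have hcard : 2 ≤ s.card := Finset.one_lt_card.mpr ⟨i, hi, j, hj, hij⟩
    have hc1 : (s.erase i).card = s.card - 1 := Finset.card_erase_of_mem hi
    have hc2 : ((s.erase i).erase j).card = s.card - 2 := by
      rw [Finset.card_erase_of_mem hji, hc1]; omega
    rw [← e2, ← e1, e3, hc2, hfi, hfj]
    have : ((s.card - 2 : ℕ) : ℚ) = (s.card : ℚ) - 2 := by
      have : (2:ℚ) ≤ (s.card : ℚ) := by exact_mod_cast hcard
      push_cast [Nat.cast_sub hcard]
      ring
    rw [this]
    linarith [hpair]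


lemma case_pow2 {ι : Type*} [DecidableEq ι] (s : Finset ι) (β : ι → ℕ)
    (hβ : ∀ k ∈ s, 0 < β k) (hβ2 : ∀ k ∈ s, 2 ≤ β k)
    (htop : ∀ p : ℕ, p.Prime → p ∣ s.lcm β →
      ∃ i ∈ s, ∃ j ∈ s, i ≠ j ∧ (β i).factorization p = (β j).factorization p ∧
        ∀ k ∈ s, (β k).factorization p ≤ (β i).factorization p)
    (hcap : 2 ≤ ∑ k ∈ s, (1 - 1/(β k : ℚ)))
    (hcard3 : 3 ≤ s.card)
    (K : ℕ) (hpow : s.lcm β = 2 ^ K) :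
    ∃ d : ι → ℕ, (∀ k ∈ s, 0 < d k) ∧
      ∑ k ∈ s, (d k : ℚ) / β k = (s.card : ℚ) - 2 := by
  classical
  have hβne : ∀ k ∈ s, β k ≠ 0 := fun k hk => (hβ k hk).ne'
  have hdvdB : ∀ x ∈ s, β x ∣ s.lcm β := fun x hx => Finset.dvd_lcm hx
  have hpow2 : ∀ x ∈ s, ∃ c ≤ K, β x = 2 ^ c := by
    intro x hx
    have := hdvdB x hx
    rw [hpow] at this
    exact (Nat.dvd_prime_pow Nat.prime_two).mp this
  by_cases hall2 : ∀ x ∈ s, β x = 2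
  · -- all β = 2
    have hsum : ∑ k ∈ s, (1 - 1/(β k : ℚ)) = (s.card : ℚ) * (1/2) := by
      rw [Finset.sum_congr rfl (g := fun _ => (1/2 : ℚ))
        (fun x hx => by rw [hall2 x hx]; norm_num), Finset.sum_const, nsmul_eq_mul]
    have hcard4 : 4 ≤ s.card := by
      rw [hsum] at hcap
      have : (4:ℚ) ≤ (s.card:ℚ) := by linarith
      exact_mod_cast this
    obtain ⟨tt, htts, httc⟩ := Finset.exists_subset_card_eq hcard4
    refine ⟨fun x => if x ∈ tt then 1 else 2, ?_, ?_⟩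
    · intro x _
      by_cases h : x ∈ tt <;> simp [h]
    · set f : ι → ℚ := fun x => ((if x ∈ tt then 1 else 2 : ℕ) : ℚ) / β x with hf
      have e0 : ∑ x ∈ s \ tt, f x + ∑ x ∈ tt, f x = ∑ x ∈ s, f x := Finset.sum_sdiff htts
      have e1 : ∑ x ∈ tt, f x = 2 := by
        rw [Finset.sum_congr rfl (g := fun _ => (1/2 : ℚ))
          (fun x hx => by simp [hf, hx, hall2 x (htts hx)]), Finset.sum_const, httc]
        norm_num
      have e2 : ∑ x ∈ s \ tt, f x = (s.card : ℚ) - 4 := by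
        rw [Finset.sum_congr rfl (g := fun _ => (1 : ℚ)) (fun x hx => by
          obtain ⟨hxs, hxt⟩ := Finset.mem_sdiff.mp hx
          simp [hf, hxt, hall2 x hxs]), Finset.sum_const, Finset.card_sdiff_of_subset htts, httc, nsmul_eq_mul, mul_one,
          Nat.cast_sub hcard4]
        norm_num
      rw [← e0, e1, e2]
      ring
  · -- some β x ≥ 4
    push_neg at hall2
    obtain ⟨k1, hk1, hk1ne⟩ := hall2
    have hk14 : 4 ≤ β k1 := by
      obtain ⟨c, hcK, hc⟩ := hpow2 k1 hk1
      have h2 := hβ2 k1 hk1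
      rcases c with _ | _ | n
      · rw [hc] at h2; norm_num at h2
      · rw [hc] at hk1ne; norm_num at hk1ne
      · rw [hc]
        calc 4 = 2^2 := by norm_num
        _ ≤ 2^(n+2) := Nat.pow_le_pow_right (by norm_num) (by omega)
    have hBne : s.lcm β ≠ 0 := by rw [hpow]; positivity
    have hBpos : 0 < s.lcm β := Nat.pos_of_ne_zero hBne
    have h2B : (2:ℕ) ∣ s.lcm β := by
      have h2k1 : (2:ℕ) ∣ β k1 := by
        obtain ⟨c, hcK, hc⟩ := hpow2 k1 hk1
        rcases c with _ | n
        · rw [hc] at hk14; norm_num at hk14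
        · rw [hc]; exact dvd_pow_self 2 (Nat.succ_ne_zero n)
      exact h2k1.trans (hdvdB k1 hk1)
    obtain ⟨i, hi, j, hj, hij, heq, hmax⟩ := htop 2 Nat.prime_two h2B
    have hBfact : (s.lcm β).factorization 2 = K := by
      rw [hpow, Nat.Prime.factorization_pow Nat.prime_two, Finsupp.single_eq_same]
    have hxB : ∀ x ∈ s, (β x).factorization 2 = (s.lcm β).factorization 2 → β x = s.lcm β := by
      intro x hx hfx
      obtain ⟨c, hcK, hc⟩ := hpow2 x hx
      have h1 : (β x).factorization 2 = c := by
        rw [hc, Nat.Prime.factorization_pow Nat.prime_two, Finsupp.single_eq_same]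
      rw [hc, hpow]
      rw [h1, hBfact] at hfx
      rw [hfx]
    have hieq : (β i).factorization 2 = (s.lcm β).factorization 2 := by
      rw [lcm_factorization s β hβne 2]
      exact le_antisymm
        (by rw [← lcm_factorization s β hβne 2]
            exact (Nat.factorization_le_iff_dvd (hβne i hi) hBne).mpr (hdvdB i hi) 2)
        (Finset.sup_le (fun x hx => hmax x hx))
    have hiB : β i = s.lcm β := hxB i hi hieq
    have hjB : β j = s.lcm β := hxB j hj (heq ▸ hieq)
    have hB4 : 4 ≤ s.lcm β := le_trans hk14 (Nat.le_of_dvd hBpos (hdvdB k1 hk1))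
    have hji : j ∈ s.erase i := Finset.mem_erase.mpr ⟨fun h => hij h.symm, hj⟩
    set s' := (s.erase i).erase j with hs'
    have hmem_s' : ∀ x, x ∈ s' ↔ x ≠ j ∧ x ≠ i ∧ x ∈ s := by
      intro x
      simp [hs', Finset.mem_erase, and_assoc]
    have hcards' : s'.card = s.card - 2 := by
      rw [hs', Finset.card_erase_of_mem hji, Finset.card_erase_of_mem hi]
      omega
    have hs'ne : s'.Nonempty := Finset.card_pos.mp (by omega)
    obtain ⟨k0, hk0⟩ := hs'ne
    obtain ⟨hk0j, hk0i, hk0s⟩ := (hmem_s' k0).mp hk0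
    have hdvdk0 : β k0 ∣ s.lcm β := hdvdB k0 hk0s
    have hk02 : 2 ≤ β k0 := hβ2 k0 hk0s
    have hdivle : s.lcm β / β k0 ≤ s.lcm β / 2 := Nat.div_le_div_left hk02 (by norm_num)
    have hdivle2 : s.lcm β / β k0 ≤ s.lcm β := Nat.div_le_self _ _
    have hjval : 1 ≤ s.lcm β - s.lcm β / β k0 - 1 := by
      generalize hq : s.lcm β / β k0 = q at hdivle hdivle2 ⊢
      omega
    refine ⟨fun x => if x = i then 1 else if x = j then s.lcm β - s.lcm β / β k0 - 1
      else if x = k0 then 1 else β x, ?_, ?_⟩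
    · intro x hx
      by_cases h1 : x = i
      · simp [h1]
      · by_cases h2 : x = j
        · subst h2
          simp only [if_neg h1, if_pos rfl]
          exact hjval
        · by_cases h3 : x = k0
          · simp [h1, h2, h3, hk0i, hk0j]
          · simpa [h1, h2, h3] using hβ x hx
    · set f : ι → ℚ := fun x => ((if x = i then 1 else if x = j then s.lcm β - s.lcm β / β k0 - 1
        else if x = k0 then 1 else β x : ℕ) : ℚ) / β x with hf
      have e1 : ∑ x ∈ s', f x + f j = ∑ x ∈ s.erase i, f x := Finset.sum_erase_add _ _ hji
      have e2 : ∑ x ∈ s.erase i, f x + f i = ∑ x ∈ s, f x := Finset.sum_erase_add _ _ hi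
      have e3 : ∑ x ∈ s'.erase k0, f x + f k0 = ∑ x ∈ s', f x := Finset.sum_erase_add _ _ hk0
      have hr : ∑ x ∈ s'.erase k0, f x = ((s'.erase k0).card : ℚ) := by
        rw [Finset.sum_congr rfl (g := fun _ => (1:ℚ)) ?_, Finset.sum_const, nsmul_eq_mul, mul_one]
        intro x hx
        have hxk0 : x ≠ k0 := (Finset.mem_erase.mp hx).1
        obtain ⟨hxj, hxi, hxs⟩ := (hmem_s' x).mp (Finset.mem_of_mem_erase hx)
        have hβx : (β x : ℚ) ≠ 0 := by
          have := hβ x hxs; positivity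
        simp only [hf, hxi, hxj, hxk0, if_false]
        exact div_self hβx
      have hcardr : ((s'.erase k0).card : ℚ) = (s.card : ℚ) - 3 := by
        rw [Finset.card_erase_of_mem hk0, hcards',
          show s.card - 2 - 1 = s.card - 3 from by omega, Nat.cast_sub hcard3]
        norm_num
      have hβk0Q : (β k0 : ℚ) ≠ 0 := by
        have := hβ k0 hk0s; positivity
      have hBQ : ((s.lcm β : ℕ) : ℚ) ≠ 0 := Nat.cast_ne_zero.mpr hBne
      have hfi : f i = 1/((s.lcm β : ℕ):ℚ) := by simp [hf, hiB]
      have hfk0 : f k0 = 1/(β k0 : ℚ) := by simp [hf, hk0i, hk0j]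
      have hcastdiv : ((s.lcm β / β k0 : ℕ) : ℚ) = ((s.lcm β:ℕ):ℚ)/(β k0 : ℚ) :=
        Nat.cast_div hdvdk0 hβk0Q
      have hX1 : 1 ≤ s.lcm β - s.lcm β / β k0 := by
        generalize hq : s.lcm β / β k0 = q at hdivle hdivle2 ⊢
        omega
      have hfj : f j = (((s.lcm β:ℕ):ℚ) - ((s.lcm β:ℕ):ℚ)/(β k0:ℚ) - 1)/((s.lcm β:ℕ):ℚ) := by
        have hsub : ((s.lcm β - s.lcm β / β k0 - 1 : ℕ) : ℚ)
            = ((s.lcm β:ℕ):ℚ) - ((s.lcm β:ℕ):ℚ)/(β k0:ℚ) - 1 := by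
          rw [Nat.cast_sub hX1, Nat.cast_sub hdivle2, hcastdiv, Nat.cast_one]
        simp only [hf, if_neg (Ne.symm hij), if_pos rfl, if_true]
        rw [hsub, hjB]
      have hkey : (1:ℚ)/(β k0:ℚ) +
          (((s.lcm β:ℕ):ℚ) - ((s.lcm β:ℕ):ℚ)/(β k0:ℚ) - 1)/((s.lcm β:ℕ):ℚ)
          + 1/((s.lcm β:ℕ):ℚ) = 1 := by
        field_simp
        ring
      rw [← e2, ← e1, ← e3, hr, hcardr, hfi, hfj, hfk0]
      linarith [hkey]



lemma case_odd {ι : Type*} [DecidableEq ι] (s : Finset ι) (β : ι → ℕ)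
    (hβ : ∀ k ∈ s, 0 < β k) (hβ2 : ∀ k ∈ s, 2 ≤ β k)
    (htop : ∀ p : ℕ, p.Prime → p ∣ s.lcm β →
      ∃ i ∈ s, ∃ j ∈ s, i ≠ j ∧ (β i).factorization p = (β j).factorization p ∧
        ∀ k ∈ s, (β k).factorization p ≤ (β i).factorization p)
    (hcap : 2 ≤ ∑ k ∈ s, (1 - 1/(β k : ℚ)))
    (hcard3 : 3 ≤ s.card)
    (p : ℕ) (pp : p.Prime) (podd : Odd p) (hpB : p ∣ s.lcm β) :
    ∃ d : ι → ℕ, (∀ k ∈ s, 0 < d k) ∧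
      ∑ k ∈ s, (d k : ℚ) / β k = (s.card : ℚ) - 2 := by
  have hβne : ∀ k ∈ s, β k ≠ 0 := fun k hk => (hβ k hk).ne'
  have hdivdiv : ∀ (a b : ℚ), a ≠ 0 → b ≠ 0 → (a/b)/a = 1/b := by
    intro a b ha hb; field_simp
  obtain ⟨i, hi, j, hj, hij, heq, hmax⟩ := htop p pp hpB
  obtain ⟨w, hw, hpw⟩ := exists_mem_of_prime_dvd_lcm pp hpB
  have hipos : 0 < (β i).factorization p :=
    lt_of_lt_of_le (pp.factorization_pos_of_dvd (hβne w hw) hpw) (hmax w hw)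
  have hjpos : 0 < (β j).factorization p := heq ▸ hipos
  have hpi : p ∣ β i := (pp.dvd_iff_one_le_factorization (hβne i hi)).mpr hipos
  have hpj : p ∣ β j := (pp.dvd_iff_one_le_factorization (hβne j hj)).mpr hjpos
  have hp3 : 3 ≤ p := by
    have h2 := pp.two_le
    have h3 := Nat.odd_iff.mp podd
    omega
  set G := Nat.gcd (β i) (β j) with hG
  have hpG : p ∣ G := Nat.dvd_gcd hpi hpj
  have hGpos : 0 < G := Nat.gcd_pos_of_pos_left _ (hβ i hi)
  have hG3 : 3 ≤ G := le_trans hp3 (Nat.le_of_dvd hGpos hpG)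
  set L := Nat.lcm (β i) (β j) with hL
  have hLpos : 0 < L := Nat.pos_of_ne_zero (Nat.lcm_ne_zero (hβne i hi) (hβne j hj))
  have hβiL : β i ∣ L := Nat.dvd_lcm_left _ _
  have hβjL : β j ∣ L := Nat.dvd_lcm_right _ _
  have hLQ0 : (L:ℚ) ≠ 0 := by positivity
  have hji : j ∈ s.erase i := Finset.mem_erase.mpr ⟨fun h => hij h.symm, hj⟩
  set s' := (s.erase i).erase j with hs'
  have hmem_s' : ∀ x, x ∈ s' ↔ x ≠ j ∧ x ≠ i ∧ x ∈ s := by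
    intro x
    simp [hs', Finset.mem_erase, and_assoc]
  have hcards' : s'.card = s.card - 2 := by
    rw [hs', Finset.card_erase_of_mem hji, Finset.card_erase_of_mem hi]
    omega
  have hsub' : ∀ x ∈ s', x ∈ s := fun x hx => ((hmem_s' x).mp hx).2.2
  by_cases hk0ex : ∃ k0 ∈ s', 2 ≤ Nat.gcd (β k0) L
  · -- CASE 3a
    obtain ⟨k0, hk0, hk0g⟩ := hk0ex
    set t : ι → ℕ := fun x => Nat.gcd (β x) L with ht
    have htpos : ∀ x ∈ s', 0 < t x := fun x hx => Nat.gcd_pos_of_pos_left _ (hβ x (hsub' x hx))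
    have htdvdL : ∀ x, t x ∣ L := fun x => Nat.gcd_dvd_right _ _
    have htdvdβ : ∀ x, t x ∣ β x := fun x => Nat.gcd_dvd_left _ _
    have hsumle : ∑ x ∈ s', L / t x ≤ (s.card - 2) * L := by
      calc ∑ x ∈ s', L / t x ≤ s'.card • L :=
        Finset.sum_le_card_nsmul _ _ _ (fun x _ => Nat.div_le_self _ _)
      _ = (s.card - 2) * L := by rw [hcards', smul_eq_mul]
    set N := (s.card - 2) * L - ∑ x ∈ s', L / t x with hN
    have hcast_sum : ((∑ x ∈ s', L / t x : ℕ) : ℚ) = ∑ x ∈ s', (L:ℚ) / t x := by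
      push_cast
      refine Finset.sum_congr rfl (fun x hx => ?_)
      have h0 : ((t x : ℕ):ℚ) ≠ 0 := by
        have := htpos x hx; positivity
      exact Nat.cast_div (htdvdL x) h0
    have hcard2 : 2 ≤ s.card := by omega
    have hcastc : ((s.card - 2 : ℕ) : ℚ) = (s.card : ℚ) - 2 := by
      push_cast [Nat.cast_sub hcard2]; ring
    have hNQ : (N : ℚ) = ((s.card:ℚ) - 2) * L - ∑ x ∈ s', (L:ℚ) / t x := by
      rw [hN]
      push_cast [Nat.cast_sub hsumle]
      rw [← hcast_sum, hcastc]
      push_cast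
      ring
    -- lower bound on N
    have hbound : ∑ x ∈ s', (L:ℚ) / t x ≤ ((s.card:ℚ) - 3) * L + (L:ℚ)/2 := by
      have e := Finset.sum_erase_add s' (fun x => (L:ℚ)/ t x) hk0
      have h1 : ∑ x ∈ s'.erase k0, (L:ℚ)/ t x ≤ ((s.card:ℚ) - 3) * L := by
        have h2 : ∑ x ∈ s'.erase k0, (L:ℚ)/ t x ≤ (s'.erase k0).card • (L:ℚ) := by
          apply Finset.sum_le_card_nsmul
          intro x hx
          have htx : 1 ≤ t x := htpos x (Finset.mem_of_mem_erase hx)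
          have htxQ : (1:ℚ) ≤ t x := by exact_mod_cast htx
          calc (L:ℚ)/ t x ≤ (L:ℚ)/1 := by
                apply div_le_div_of_nonneg_left _ _ htxQ <;> positivity
          _ = L := div_one _
        have h3 : (s'.erase k0).card = s.card - 3 := by
          rw [Finset.card_erase_of_mem hk0, hcards']; omega
        rw [h3, nsmul_eq_mul] at h2
        have h4 : ((s.card - 3 : ℕ):ℚ) = (s.card:ℚ) - 3 := by
          push_cast [Nat.cast_sub hcard3]; ring
        rw [h4] at h2
        exact h2
      have h5 : (L:ℚ)/ t k0 ≤ (L:ℚ)/2 := by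
        have : (2:ℚ) ≤ t k0 := by exact_mod_cast hk0g
        apply div_le_div_of_nonneg_left _ _ this <;> positivity
      have e' : ∑ x ∈ s', (L:ℚ)/ t x = ∑ x ∈ s'.erase k0, (L:ℚ)/ t x + (L:ℚ)/ t k0 := e.symm
      rw [e']
      linarith
    have hNge : (L:ℚ)/2 ≤ (N:ℚ) := by
      have expand : ((s.card:ℚ) - 2) * L - (((s.card:ℚ) - 3) * L + (L:ℚ)/2) = (L:ℚ)/2 := by ring
      rw [hNQ]
      linarith
    have hLQpos : (0:ℚ) < L := by positivity
    have hNG : L < N * G := by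
      have hGQ : (3:ℚ) ≤ G := by exact_mod_cast hG3
      have hNQ0 : (0:ℚ) ≤ N := by positivity
      have h1 : (L:ℚ) < N * G := by nlinarith
      exact_mod_cast h1
    obtain ⟨u, v, hu, hv, hpair⟩ := pair_sum (β i) (β j) N (hβ i hi) (hβ j hj) hNG
    refine ⟨fun x => if x = i then u else if x = j then v else β x / Nat.gcd (β x) L, ?_, ?_⟩
    · intro x hx
      by_cases h1 : x = i
      · simpa [h1] using hu
      · by_cases h2 : x = j
        · simpa [h1, h2, Ne.symm hij] using hv
        · have hxs' : x ∈ s' := (hmem_s' x).mpr ⟨h2, h1, hx⟩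
          have : 0 < β x / t x :=
            Nat.div_pos (Nat.le_of_dvd (hβ x hx) (htdvdβ x)) (htpos x hxs')
          simp only [h1, h2, if_false]; exact this
    · set f : ι → ℚ := fun x =>
        ((if x = i then u else if x = j then v else β x / Nat.gcd (β x) L : ℕ) : ℚ) / β x with hf
      have e1 : ∑ x ∈ s', f x + f j = ∑ x ∈ s.erase i, f x := Finset.sum_erase_add _ _ hji
      have e2 : ∑ x ∈ s.erase i, f x + f i = ∑ x ∈ s, f x := Finset.sum_erase_add _ _ hi
      have e3 : ∑ x ∈ s', f x = ∑ x ∈ s', (1:ℚ) / t x := by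
        refine Finset.sum_congr rfl (fun x hx => ?_)
        obtain ⟨hxj, hxi, hxs⟩ := (hmem_s' x).mp hx
        have hβx0 : (β x : ℚ) ≠ 0 := by
          have := hβ x hxs; positivity
        have htx0 : (t x : ℚ) ≠ 0 := by
          have := htpos x hx; positivity
        simp only [hf, hxi, hxj, if_false]
        rw [Nat.cast_div (htdvdβ x) htx0, hdivdiv _ _ hβx0 htx0]
      have hfi : f i = (u:ℚ)/ β i := by simp [hf]
      have hfj : f j = (v:ℚ)/ β j := by simp [hf, Ne.symm hij]
      have hNL : (N:ℚ)/L = ((s.card:ℚ) - 2) - ∑ x ∈ s', (1:ℚ) / t x := by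
        rw [hNQ, sub_div, mul_div_assoc, div_self hLQ0, mul_one, Finset.sum_div]
        congr 1
        refine Finset.sum_congr rfl (fun x hx => ?_)
        have htx0 : (t x : ℚ) ≠ 0 := by
          have := htpos x hx; positivity
        exact hdivdiv _ _ hLQ0 htx0
      rw [← e2, ← e1, e3, hfi, hfj]
      have : (u:ℚ)/β i + (v:ℚ)/β j = (N:ℚ)/L := hpair
      rw [hNL] at this
      linarith [this]
  · -- CASE 3b
    push_neg at hk0ex
    have hgcd1 : ∀ x ∈ s', Nat.gcd (β x) L = 1 := by
      intro x hx
      have h1 := hk0ex x hx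
      have h2 : 0 < Nat.gcd (β x) L := Nat.gcd_pos_of_pos_left _ (hβ x (hsub' x hx))
      omega
    have hLdvdB : L ∣ s.lcm β := Nat.lcm_dvd (Finset.dvd_lcm hi) (Finset.dvd_lcm hj)
    have key : ∀ q : ℕ, L.factorization q ≤ (β i).factorization q ∧
        L.factorization q ≤ (β j).factorization q := by
      intro q
      by_cases hq0 : L.factorization q = 0
      · omega
      · have hqmem : q ∈ L.primeFactors := by
          rw [← Nat.support_factorization]
          exact Finsupp.mem_support_iff.mpr hq0
        have hqprime : q.Prime := Nat.prime_of_mem_primeFactors hqmem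
        have hqL : q ∣ L := Nat.dvd_of_mem_primeFactors hqmem
        obtain ⟨i', hi', j', hj', hij', heq', hmax'⟩ := htop q hqprime (hqL.trans hLdvdB)
        have hfactL : L.factorization q = (β i).factorization q ⊔ (β j).factorization q := by
          rw [hL]
          show (Nat.lcm (β i) (β j)).factorization q = _
          rw [Nat.factorization_lcm (hβne i hi) (hβne j hj), Finsupp.sup_apply]
        have hmaxpos : 0 < (β i').factorization q := by
          have h1 : 0 < L.factorization q := Nat.pos_of_ne_zero hq0
          rw [hfactL] at h1
          rcases lt_sup_iff.mp h1 with h | h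
          · exact lt_of_lt_of_le h (hmax' i hi)
          · exact lt_of_lt_of_le h (hmax' j hj)
        have hqnots' : ∀ x ∈ s', (β x).factorization q = 0 := by
          intro x hx
          by_contra hne
          have hqx : q ∣ β x := (hqprime.dvd_iff_one_le_factorization
            (hβne x (hsub' x hx))).mpr (Nat.pos_of_ne_zero hne)
          have hd : q ∣ Nat.gcd (β x) L := Nat.dvd_gcd hqx hqL
          rw [hgcd1 x hx] at hd
          exact hqprime.one_lt.ne' (Nat.dvd_one.mp hd)
        have hmem_ij : ∀ x ∈ s, 0 < (β x).factorization q → x = i ∨ x = j := by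
          intro x hx hposx
          by_contra hcon
          push_neg at hcon
          have hxs' : x ∈ s' := (hmem_s' x).mpr ⟨hcon.2, hcon.1, hx⟩
          rw [hqnots' x hxs'] at hposx
          omega
        have hj'pos : 0 < (β j').factorization q := heq' ▸ hmaxpos
        have hi'ij := hmem_ij i' hi' hmaxpos
        have hj'ij := hmem_ij j' hj' hj'pos
        have hboth : (β i).factorization q = (β i').factorization q ∧
            (β j).factorization q = (β i').factorization q := by
          rcases hi'ij with h1 | h1 <;> rcases hj'ij with h2 | h2
          · exact absurd (h1.trans h2.symm) hij'
          · subst h1; subst h2; exact ⟨rfl, heq'.symm⟩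
          · subst h1; subst h2; exact ⟨heq'.symm, rfl⟩
          · exact absurd (h1.trans h2.symm) hij'
        rw [hfactL, hboth.1, hboth.2]
        simp
    have hLi : L ∣ β i := by
      rw [← Nat.factorization_le_iff_dvd hLpos.ne' (hβne i hi)]
      exact Finsupp.le_def.mpr (fun q => (key q).1)
    have hLj : L ∣ β j := by
      rw [← Nat.factorization_le_iff_dvd hLpos.ne' (hβne j hj)]
      exact Finsupp.le_def.mpr (fun q => (key q).2)
    have hβiL' : β i = L := Nat.dvd_antisymm hβiL hLi
    have hβjL' : β j = L := Nat.dvd_antisymm hβjL hLj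
    have hs'ne : s'.Nonempty := Finset.card_pos.mp (by omega)
    obtain ⟨k1, hk1⟩ := hs'ne
    have hB'1 : s'.lcm β ≠ 1 := by
      intro h
      have hd : β k1 ∣ s'.lcm β := Finset.dvd_lcm hk1
      rw [h] at hd
      have h2 := Nat.dvd_one.mp hd
      have h3 := hβ2 k1 (hsub' k1 hk1)
      omega
    obtain ⟨q', hq'prime, hq'B'⟩ := Nat.exists_prime_and_dvd hB'1
    obtain ⟨w', hw', hq'w⟩ := exists_mem_of_prime_dvd_lcm hq'prime hq'B'
    have hq'L : ¬ q' ∣ L := by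
      intro h
      have hd : q' ∣ Nat.gcd (β w') L := Nat.dvd_gcd hq'w h
      rw [hgcd1 w' hw'] at hd
      exact hq'prime.one_lt.ne' (Nat.dvd_one.mp hd)
    have hq'B : q' ∣ s.lcm β := hq'w.trans (Finset.dvd_lcm (hsub' w' hw'))
    obtain ⟨i'', hi'', j'', hj'', hij'', heq'', hmax''⟩ := htop q' hq'prime hq'B
    have hi''pos : 0 < (β i'').factorization q' :=
      lt_of_lt_of_le (hq'prime.factorization_pos_of_dvd (hβne w' (hsub' w' hw')) hq'w)
        (hmax'' w' (hsub' w' hw'))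
    have hj''pos : 0 < (β j'').factorization q' := heq'' ▸ hi''pos
    have hq'i'' : q' ∣ β i'' := (hq'prime.dvd_iff_one_le_factorization (hβne i'' hi'')).mpr hi''pos
    have hq'j'' : q' ∣ β j'' := (hq'prime.dvd_iff_one_le_factorization (hβne j'' hj'')).mpr hj''pos
    have hi''s' : i'' ∈ s' := by
      rw [hmem_s']
      refine ⟨?_, ?_, hi''⟩
      · intro h; rw [h, hβjL'] at hq'i''; exact hq'L hq'i''
      · intro h; rw [h, hβiL'] at hq'i''; exact hq'L hq'i''
    have hj''s' : j'' ∈ s' := by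
      rw [hmem_s']
      refine ⟨?_, ?_, hj''⟩
      · intro h; rw [h, hβjL'] at hq'j''; exact hq'L hq'j''
      · intro h; rw [h, hβiL'] at hq'j''; exact hq'L hq'j''
    have hgcdpos : 0 < Nat.gcd (β i'') (β j'') := Nat.gcd_pos_of_pos_left _ (hβ i'' hi'')
    have hgcd2 : 2 ≤ Nat.gcd (β i'') (β j'') :=
      le_trans hq'prime.two_le (Nat.le_of_dvd hgcdpos (Nat.dvd_gcd hq'i'' hq'j''))
    obtain ⟨d', hd'pos, hd'sum⟩ := deficit_one s' β (fun x hx => hβ x (hsub' x hx))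
      i'' j'' hi''s' hj''s' hij'' hgcd2
    have hL3 : 3 ≤ L := le_trans hG3 (Nat.le_of_dvd hLpos ((Nat.gcd_dvd_left _ _).trans hβiL))
    refine ⟨fun x => if x = i then 1 else if x = j then L - 1 else d' x, ?_, ?_⟩
    · intro x hx
      by_cases h1 : x = i
      · simp [h1]
      · by_cases h2 : x = j
        · subst h2
          simp only [if_neg h1, if_pos rfl]
          exact Nat.sub_pos_of_lt (lt_of_lt_of_le (by norm_num) hL3)
        · simpa [h1, h2] using hd'pos x ((hmem_s' x).mpr ⟨h2, h1, hx⟩)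
    · set f : ι → ℚ := fun x =>
        ((if x = i then 1 else if x = j then L - 1 else d' x : ℕ) : ℚ) / β x with hf
      have e1 : ∑ x ∈ s', f x + f j = ∑ x ∈ s.erase i, f x := Finset.sum_erase_add _ _ hji
      have e2 : ∑ x ∈ s.erase i, f x + f i = ∑ x ∈ s, f x := Finset.sum_erase_add _ _ hi
      have e3 : ∑ x ∈ s', f x = ∑ x ∈ s', (d' x : ℚ) / β x := by
        refine Finset.sum_congr rfl (fun x hx => ?_)
        obtain ⟨hxj, hxi, hxs⟩ := (hmem_s' x).mp hx
        simp [hf, hxi, hxj]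
      have hfi : f i = 1/(L:ℚ) := by simp [hf, hβiL']
      have hfj : f j = ((L:ℚ) - 1)/(L:ℚ) := by
        have hc : ((L - 1 : ℕ):ℚ) = (L:ℚ) - 1 := by
          push_cast [Nat.cast_sub (by omega : 1 ≤ L)]; ring
        simp [hf, Ne.symm hij, hβjL', hc]
      have hcard2 : 2 ≤ s.card := by omega
      have hcs' : (s'.card : ℚ) = (s.card:ℚ) - 2 := by
        rw [hcards']
        push_cast [Nat.cast_sub hcard2]
        ring
      rw [← e2, ← e1, e3, hd'sum, hfi, hfj, hcs']
      field_simp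
      ring


lemma core_lemma {ι : Type*} [DecidableEq ι] :
    ∀ s : Finset ι, ∀ β : ι → ℕ,
    (∀ k ∈ s, 0 < β k) →
    (∀ p : ℕ, p.Prime → p ∣ s.lcm β →
      ∃ i ∈ s, ∃ j ∈ s, i ≠ j ∧ (β i).factorization p = (β j).factorization p ∧
        ∀ k ∈ s, (β k).factorization p ≤ (β i).factorization p) →
    (2 ≤ ∑ k ∈ s, (1 - 1/(β k : ℚ))) →
    ∃ d : ι → ℕ, (∀ k ∈ s, 0 < d k) ∧
      ∑ k ∈ s, (d k : ℚ) / β k = (s.card : ℚ) - 2 := by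
  intro s
  induction s using Finset.strongInduction with
  | _ s IH =>
  intro β hβ htop hcap
  by_cases h1 : ∃ k ∈ s, β k = 1
  · -- Case 1 : remove an index with β = 1
    obtain ⟨k, hk, hβk⟩ := h1
    set s' := s.erase k with hs'
    have hss : s' ⊂ s := Finset.erase_ssubset hk
    have hsub : ∀ x ∈ s', x ∈ s := fun x hx => Finset.mem_of_mem_erase hx
    have hβ' : ∀ x ∈ s', 0 < β x := fun x hx => hβ x (hsub x hx)
    have hlcm_dvd : s'.lcm β ∣ s.lcm β :=
      Finset.lcm_dvd (fun b hb => Finset.dvd_lcm (hsub b hb))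
    have htop' : ∀ p : ℕ, p.Prime → p ∣ s'.lcm β →
        ∃ i ∈ s', ∃ j ∈ s', i ≠ j ∧ (β i).factorization p = (β j).factorization p ∧
          ∀ x ∈ s', (β x).factorization p ≤ (β i).factorization p := by
      intro p pp hpl
      obtain ⟨i, hi, j, hj, hij, heq, hmax⟩ := htop p pp (hpl.trans hlcm_dvd)
      obtain ⟨w, hw, hpw⟩ := exists_mem_of_prime_dvd_lcm pp hpl
      have hw1 : 0 < (β w).factorization p :=
        pp.factorization_pos_of_dvd (hβ w (hsub w hw)).ne' hpw
      have hipos : 0 < (β i).factorization p := lt_of_lt_of_le hw1 (hmax w (hsub w hw))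
      have hjpos : 0 < (β j).factorization p := by rw [← heq]; exact hipos
      have hik : i ≠ k := by
        intro h; rw [h, hβk] at hipos; simp [Nat.factorization_one] at hipos
      have hjk : j ≠ k := by
        intro h; rw [h, hβk] at hjpos; simp [Nat.factorization_one] at hjpos
      exact ⟨i, Finset.mem_erase.mpr ⟨hik, hi⟩, j, Finset.mem_erase.mpr ⟨hjk, hj⟩, hij, heq,
        fun x hx => hmax x (hsub x hx)⟩
    have hcap' : 2 ≤ ∑ x ∈ s', (1 - 1/(β x : ℚ)) := by
      have := Finset.sum_erase_add s (fun x => (1 - 1/(β x : ℚ))) hk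
      simp only [hβk, Nat.cast_one, div_one, sub_self, add_zero] at this
      rw [← hs'] at this
      linarith [this, hcap]
    obtain ⟨d', hd'pos, hd'sum⟩ := IH s' hss β hβ' htop' hcap'
    refine ⟨fun x => if x = k then 1 else d' x, ?_, ?_⟩
    · intro x hx
      by_cases h : x = k
      · simp [h]
      · simpa [h] using hd'pos x (Finset.mem_erase.mpr ⟨h, hx⟩)
    · set f : ι → ℚ := fun x => ((if x = k then 1 else d' x : ℕ) : ℚ) / β x with hf
      have e2 : ∑ x ∈ s', f x + f k = ∑ x ∈ s, f x := Finset.sum_erase_add _ _ hk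
      have efk : f k = 1 := by simp [hf, hβk]
      have e3 : ∑ x ∈ s', f x = ∑ x ∈ s', (d' x : ℚ) / β x := by
        apply Finset.sum_congr rfl
        intro x hx
        have : x ≠ k := (Finset.mem_erase.mp hx).1
        simp [hf, this]
      have hcard : 1 ≤ s.card := Finset.card_pos.mpr ⟨k, hk⟩
      have hc : (s'.card : ℚ) = (s.card : ℚ) - 1 := by
        rw [hs', Finset.card_erase_of_mem hk]
        push_cast [Nat.cast_sub hcard]
        ring
      rw [← e2, e3, hd'sum, efk, hc]
      ring
  · -- Case 2/3 : all β ≥ 2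
    push_neg at h1
    have hβ2 : ∀ k ∈ s, 2 ≤ β k := by
      intro k hk
      have h2 := hβ k hk
      have h3 := h1 k hk
      omega
    have hsne : s.Nonempty := by
      rcases Finset.eq_empty_or_nonempty s with h | h
      · rw [h] at hcap; norm_num at hcap
      · exact h
    have hcard3 : 3 ≤ s.card := by
      have hlt : ∑ k ∈ s, (1 - 1/(β k : ℚ)) < ∑ k ∈ s, (1:ℚ) := by
        apply Finset.sum_lt_sum_of_nonempty hsne
        intro k hk
        have h2 : (1:ℚ) ≤ (β k:ℚ) := by exact_mod_cast hβ k hk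
        have h3 : 0 < 1/(β k:ℚ) := by positivity
        linarith
      rw [Finset.sum_const, nsmul_eq_mul, mul_one] at hlt
      have h4 : (2:ℚ) < (s.card:ℚ) := lt_of_le_of_lt hcap hlt
      have h5 : 2 < s.card := by exact_mod_cast h4
      omega
    rcases Nat.eq_two_pow_or_exists_odd_prime_and_dvd (s.lcm β) with ⟨K, hK⟩ | ⟨p, pp, hpB, podd⟩
    · exact case_pow2 s β hβ hβ2 htop hcap hcard3 K hK
    · exact case_odd s β hβ hβ2 htop hcap hcard3 p pp podd hpB



theorem brieskorn_a_invariant_in_semigroup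
    (m : ℕ) (hm : 3 ≤ m) (a : Fin m → ℕ)
    (ha : ∀ i, 2 ≤ a i) (hmono : Monotone a)
    (ℓ : ℕ) (hℓ : ℓ = Finset.univ.lcm a)
    (ℓi : Fin m → ℕ) (hℓi : ∀ i, ℓi i = (Finset.univ.erase i).lcm a)
    (α : Fin m → ℕ) (hα : ∀ i, α i = ℓ / ℓi i)
    (e : Fin m → ℕ) (he : ∀ i, e i = ℓ / a i)
    (g : ℕ) (hg : g = (∏ i, a i) / ℓ)
    (gi : Fin m → ℕ) (hgi : ∀ i, gi i = g * α i / a i)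
    (hpos : (0 : ℤ) ≤ ((m : ℤ) - 2) * (g : ℤ) - ∑ i, (gi i : ℤ)) :
    (∃ c : Fin m → ℕ,
      ((m : ℤ) - 2) * (ℓ : ℤ) - ∑ i, (e i : ℤ) = ∑ i, (c i : ℤ) * (e i : ℤ)) ∧
    (∃ c' : Fin m → ℕ,
      ((m : ℤ) - 2) * (g : ℤ) - ∑ i, (gi i : ℤ) = ∑ i, (c' i : ℤ) * (gi i : ℤ)) := by
  classical
  set β : Fin m → ℕ := fun i => Nat.gcd (a i) (ℓi i) with hβdef
  have ha0 : ∀ i, a i ≠ 0 := fun i => by have := ha i; omega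
  have hapos : ∀ i, 0 < a i := fun i => by have := ha i; omega
  have hℓ0 : ℓ ≠ 0 := by
    rw [hℓ]; intro h
    rw [Finset.lcm_eq_zero_iff] at h
    obtain ⟨j, _, hj⟩ := h
    exact ha0 j hj
  have hℓi0 : ∀ i, ℓi i ≠ 0 := by
    intro i
    rw [hℓi]; intro h
    rw [Finset.lcm_eq_zero_iff] at h
    obtain ⟨j, _, hj⟩ := h
    exact ha0 j hj
  have hℓpos : 0 < ℓ := Nat.pos_of_ne_zero hℓ0
  have hdvd_aℓ : ∀ i, a i ∣ ℓ := fun i => hℓ ▸ Finset.dvd_lcm (Finset.mem_univ i)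
  have hdvd_ji : ∀ i j, j ≠ i → a j ∣ ℓi i := fun i j hj =>
    (hℓi i) ▸ Finset.dvd_lcm (Finset.mem_erase.mpr ⟨hj, Finset.mem_univ j⟩)
  have hdvd_ℓiℓ : ∀ i, ℓi i ∣ ℓ := by
    intro i
    rw [hℓi, hℓ]
    exact Finset.lcm_dvd (fun j hj => Finset.dvd_lcm (Finset.mem_univ j))
  have hins : ∀ i, ℓ = Nat.lcm (a i) (ℓi i) := by
    intro i
    rw [hℓ, hℓi]
    conv_lhs => rw [← Finset.insert_erase (Finset.mem_univ i)]
    rw [Finset.lcm_insert]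
    rfl
  have he' : ∀ i, e i * a i = ℓ := fun i => by rw [he i]; exact Nat.div_mul_cancel (hdvd_aℓ i)
  have hα' : ∀ i, α i * ℓi i = ℓ := fun i => by rw [hα i]; exact Nat.div_mul_cancel (hdvd_ℓiℓ i)
  have hβpos : ∀ i, 0 < β i := fun i => Nat.gcd_pos_of_pos_left _ (hapos i)
  have hβℓ : ∀ i, β i * ℓ = a i * ℓi i := by
    intro i
    have h := Nat.gcd_mul_lcm (a i) (ℓi i)
    rw [← hins i] at h
    exact h
  have hℓ_dvd_prod : ℓ ∣ ∏ i, a i := by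
    rw [hℓ]
    exact Finset.lcm_dvd (fun i _ => Finset.dvd_prod_of_mem a (Finset.mem_univ i))
  have hg' : g * ℓ = ∏ i, a i := by rw [hg]; exact Nat.div_mul_cancel hℓ_dvd_prod
  have hprodpos : 0 < ∏ i, a i := Finset.prod_pos (fun i _ => hapos i)
  have hgpos : 0 < g := by
    rcases Nat.eq_zero_or_pos g with h | h
    · exfalso; rw [h, Nat.zero_mul] at hg'; omega
    · exact h
  have hprod_erase : ∀ i, a i * ∏ j ∈ Finset.univ.erase i, a j = ∏ j, a j :=
    fun i => Finset.mul_prod_erase _ _ (Finset.mem_univ i)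
  have hℓi_dvd_P : ∀ i, ℓi i ∣ ∏ j ∈ Finset.univ.erase i, a j := by
    intro i
    rw [hℓi]
    exact Finset.lcm_dvd (fun j hj => Finset.dvd_prod_of_mem a hj)
  set Q : Fin m → ℕ := fun i => (∏ j ∈ Finset.univ.erase i, a j) / ℓi i with hQdef
  have hQ : ∀ i, Q i * ℓi i = ∏ j ∈ Finset.univ.erase i, a j :=
    fun i => Nat.div_mul_cancel (hℓi_dvd_P i)
  have key1 : ∀ i, g * α i = a i * Q i := by
    intro i
    apply Nat.eq_of_mul_eq_mul_right (Nat.pos_of_ne_zero (hℓi0 i))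
    calc g * α i * ℓi i = g * (α i * ℓi i) := by ring
    _ = g * ℓ := by rw [hα' i]
    _ = ∏ j, a j := hg'
    _ = a i * ∏ j ∈ Finset.univ.erase i, a j := (hprod_erase i).symm
    _ = a i * (Q i * ℓi i) := by rw [hQ i]
    _ = a i * Q i * ℓi i := by ring
  have hgiQ : ∀ i, gi i = Q i := by
    intro i
    rw [hgi i, key1 i, Nat.mul_div_cancel_left _ (hapos i)]
  have key2 : ∀ i, gi i * β i = g := by
    intro i
    apply Nat.eq_of_mul_eq_mul_right hℓpos
    calc gi i * β i * ℓ = gi i * (β i * ℓ) := by ring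
    _ = gi i * (a i * ℓi i) := by rw [hβℓ i]
    _ = a i * (gi i * ℓi i) := by ring
    _ = a i * (Q i * ℓi i) := by rw [hgiQ i]
    _ = a i * ∏ j ∈ Finset.univ.erase i, a j := by rw [hQ i]
    _ = ∏ j, a j := hprod_erase i
    _ = g * ℓ := hg'.symm
  have key3 : ∀ i, α i * e i * β i = ℓ := by
    intro i
    apply Nat.eq_of_mul_eq_mul_right
      (show 0 < ℓi i * a i from Nat.mul_pos (Nat.pos_of_ne_zero (hℓi0 i)) (hapos i))
    calc α i * e i * β i * (ℓi i * a i) = (α i * ℓi i) * ((e i * a i) * β i) := by ring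
    _ = ℓ * ((e i * a i) * β i) := by rw [hα' i]
    _ = ℓ * (ℓ * β i) := by rw [he' i]
    _ = ℓ * (β i * ℓ) := by ring
    _ = ℓ * (a i * ℓi i) := by rw [hβℓ i]
    _ = ℓ * (ℓi i * a i) := by ring
  -- top-two property for β
  have hβ0 : ∀ i, β i ≠ 0 := fun i => (hβpos i).ne'
  have hfact_g : ∀ (i : Fin m) (p : ℕ), (β i).factorization p =
      min ((a i).factorization p) ((ℓi i).factorization p) := by
    intro i p
    show (Nat.gcd (a i) (ℓi i)).factorization p = _
    rw [Nat.factorization_gcd (ha0 i) (hℓi0 i), Finsupp.inf_apply]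
  have hne : Nonempty (Fin m) := ⟨⟨0, by omega⟩⟩
  have htop : ∀ p : ℕ, p.Prime → p ∣ Finset.univ.lcm β →
      ∃ i ∈ Finset.univ, ∃ j ∈ (Finset.univ : Finset (Fin m)), i ≠ j ∧
        (β i).factorization p = (β j).factorization p ∧
        ∀ k ∈ Finset.univ, (β k).factorization p ≤ (β i).factorization p := by
    intro p pp _
    obtain ⟨i₀, hi₀u, hi₀max⟩ := Finset.exists_max_image Finset.univ
      (fun i => (a i).factorization p) Finset.univ_nonempty
    have herane : (Finset.univ.erase i₀).Nonempty := by
      rw [← Finset.card_pos, Finset.card_erase_of_mem (Finset.mem_univ i₀),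
        Finset.card_univ, Fintype.card_fin]
      omega
    obtain ⟨j₀, hj₀e, hj₀max⟩ := Finset.exists_max_image (Finset.univ.erase i₀)
      (fun j => (a j).factorization p) herane
    have hj₀i₀ : j₀ ≠ i₀ := (Finset.mem_erase.mp hj₀e).1
    have hfacℓi_ge : ∀ k x, x ≠ k → (a x).factorization p ≤ (ℓi k).factorization p := by
      intro k x hxk
      exact (Nat.factorization_le_iff_dvd (ha0 x) (hℓi0 k)).mpr (hdvd_ji k x hxk) p
    have hA : ∀ k, k ≠ i₀ → (β k).factorization p = (a k).factorization p := by
      intro k hk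
      rw [hfact_g k p]
      exact min_eq_left (le_trans (hi₀max k (Finset.mem_univ k)) (hfacℓi_ge k i₀ (fun h => hk h.symm)))
    have hlcm_e : (ℓi i₀).factorization p = (a j₀).factorization p := by
      rw [hℓi i₀, lcm_factorization _ _ (fun x _ => ha0 x) p]
      exact le_antisymm (Finset.sup_le (fun x hx => hj₀max x hx))
        (Finset.le_sup (f := fun j => (a j).factorization p) hj₀e)
    have hBi₀ : (β i₀).factorization p = (a j₀).factorization p := by
      rw [hfact_g i₀ p, hlcm_e]
      exact min_eq_right (hi₀max j₀ (Finset.mem_univ j₀))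
    have hBj₀ : (β j₀).factorization p = (a j₀).factorization p := hA j₀ hj₀i₀
    refine ⟨j₀, Finset.mem_univ _, i₀, Finset.mem_univ _, hj₀i₀, by rw [hBj₀, hBi₀], ?_⟩
    intro k _
    rw [hBj₀]
    by_cases hk : k = i₀
    · rw [hk, hBi₀]
    · rw [hA k hk]
      exact hj₀max k (Finset.mem_erase.mpr ⟨hk, Finset.mem_univ k⟩)
  -- capacity
  have hgQ0 : (0:ℚ) < g := by exact_mod_cast hgpos
  have hQcap : ∑ i, (gi i:ℚ) ≤ ((m:ℚ) - 2) * g := by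
    have h1 : ∑ i, (gi i:ℤ) ≤ ((m:ℤ) - 2) * g := by linarith [hpos]
    exact_mod_cast h1
  have hinv : ∀ i, (1:ℚ)/(β i) = (gi i:ℚ)/g := by
    intro i
    have hβQ : (β i:ℚ) ≠ 0 := by
      have := hβpos i; positivity
    have hk : (gi i:ℚ) * β i = g := by exact_mod_cast key2 i
    rw [div_eq_div_iff hβQ hgQ0.ne']
    linarith [hk]
  have hcap : 2 ≤ ∑ i, (1 - 1/(β i : ℚ)) := by
    have h1 : ∑ i, (1 - 1/(β i : ℚ)) = (m:ℚ) - (∑ i, (gi i:ℚ))/g := by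
      rw [Finset.sum_sub_distrib, Finset.sum_const, Finset.card_univ, Fintype.card_fin,
        nsmul_eq_mul, mul_one]
      congr 1
      rw [Finset.sum_congr rfl (fun i _ => hinv i), ← Finset.sum_div]
    rw [h1]
    have h2 : (∑ i, (gi i:ℚ))/g ≤ (m:ℚ) - 2 := by
      rw [div_le_iff₀ hgQ0]
      linarith [hQcap]
    linarith
  obtain ⟨d, hdpos, hdsum⟩ := core_lemma Finset.univ β (fun i _ => hβpos i) htop hcap
  have hdsum' : ∑ i, (d i:ℚ)/β i = (m:ℚ) - 2 := by
    rw [hdsum, Finset.card_univ, Fintype.card_fin]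
  have hdpos' : ∀ i, 0 < d i := fun i => hdpos i (Finset.mem_univ i)
  constructor
  · -- part 1 : the e-semigroup
    have hαpos : ∀ i, 0 < α i := by
      intro i
      rcases Nat.eq_zero_or_pos (α i) with h | h
      · exfalso
        have h2 := hα' i
        rw [h, Nat.zero_mul] at h2
        exact hℓ0 h2.symm
      · exact h
    refine ⟨fun i => d i * α i - 1, ?_⟩
    have hQ1 : ∑ i, (d i:ℚ) * α i * e i = ((m:ℚ) - 2) * ℓ := by
      have hterm : ∀ i : Fin m, (d i:ℚ) * α i * e i = (ℓ:ℚ) * ((d i:ℚ)/β i) := by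
        intro i
        have hβQ : (β i:ℚ) ≠ 0 := by
          have := hβpos i; positivity
        have hk3 : (α i:ℚ) * e i * β i = ℓ := by exact_mod_cast key3 i
        field_simp
        linear_combination (d i:ℚ) * hk3
      rw [Finset.sum_congr rfl (fun i _ => hterm i), ← Finset.mul_sum, hdsum']
      ring
    have hZ1 : ∑ i, (d i:ℤ) * α i * (e i:ℤ) = ((m:ℤ) - 2) * ℓ := by exact_mod_cast hQ1
    have hc : ∀ i : Fin m, ((d i * α i - 1 : ℕ) : ℤ) = (d i : ℤ) * α i - 1 := by
      intro i
      have h1 : 1 ≤ d i * α i := Nat.mul_pos (hdpos' i) (hαpos i)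
      push_cast [Nat.cast_sub h1]
      ring
    calc ((m:ℤ)-2)*ℓ - ∑ i, (e i:ℤ) = ∑ i, ((d i:ℤ) * α i * e i) - ∑ i, (e i:ℤ) := by rw [hZ1]
    _ = ∑ i, (((d i * α i - 1:ℕ):ℤ) * e i) := by
        rw [← Finset.sum_sub_distrib]
        refine Finset.sum_congr rfl (fun i _ => ?_)
        rw [hc i]; ring
  · -- part 2 : the gi-semigroup
    refine ⟨fun i => d i - 1, ?_⟩
    have hQ2 : ∑ i, (d i:ℚ) * gi i = ((m:ℚ) - 2) * g := by
      have hterm : ∀ i : Fin m, (d i:ℚ) * gi i = (g:ℚ) * ((d i:ℚ)/β i) := by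
        intro i
        have hβQ : (β i:ℚ) ≠ 0 := by
          have := hβpos i; positivity
        have hk2 : (gi i:ℚ) * β i = g := by exact_mod_cast key2 i
        field_simp
        linear_combination (d i:ℚ) * hk2
      rw [Finset.sum_congr rfl (fun i _ => hterm i), ← Finset.mul_sum, hdsum']
      ring
    have hZ2 : ∑ i, (d i:ℤ) * gi i = ((m:ℤ) - 2) * g := by exact_mod_cast hQ2
    have hc : ∀ i : Fin m, ((d i - 1 : ℕ) : ℤ) = (d i : ℤ) - 1 := by
      intro i
      have h1 : 1 ≤ d i := hdpos' i
      push_cast [Nat.cast_sub h1]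
      ring
    calc ((m:ℤ)-2)*g - ∑ i, (gi i:ℤ) = ∑ i, ((d i:ℤ) * gi i) - ∑ i, (gi i:ℤ) := by rw [hZ2]
    _ = ∑ i, (((d i - 1:ℕ):ℤ) * gi i) := by
        rw [← Finset.sum_sub_distrib]
        refine Finset.sum_congr rfl (fun i _ => ?_)
        rw [hc i]; ring
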